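/- Let $n$ be a positive integer and let $t$ be a real number with $0 < t < 1$. Then $\sum_{k=1}^{\infty} \frac{H_{k-1} t^k}{k \binom{n+k}{k}} = \frac{1}{2}\log^2(1-t) + \frac{t\log(1-t)}{1-t} \sum_{k=1}^{n} \frac{1}{k}\Big(\frac{t-1}{t}\Big)^k + \frac{\log^2(1-t)}{2(1-t)} \sum_{k=1}^{n} \Big(\frac{t-1}{t}\Big)^k - \frac{t}{1-t} \sum_{k=1}^{n} \frac{H_k}{k}\Big(\frac{t-1}{t}\Big)^k + \frac{1}{1-t} \sum_{p=0}^{n-1} \Big\{ \sum_{k=1}^{n-p} \Big( \frac{H_{p+k} - H_k}{(p+k)k} + \frac{1}{k^2(p+k)} \Big) \Big\} p \Big(\frac{t-1}{t}\Big)^p - \frac{\log(1-t)}{1-t} \sum_{k=1}^{n} H_k \Big(\frac{t-1}{t}\Big)^k$. -/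

import Mathlib

open Finset

noncomputable def H (n : ℕ) : ℝ := ∑ i ∈ Finset.range n, (1 : ℝ) / (i + 1)

lemma H_succ (n : ℕ) : H (n + 1) = H n + 1 / (n + 1) := by
  simp [H, Finset.sum_range_succ]

lemma H_zero : H 0 = 0 := by simp [H]

lemma H_one : H 1 = 1 := by simp [H]

/-- helper: Icc 1 n sums as range sums -/
lemma sum_Icc1 (n : ℕ) (f : ℕ → ℝ) : ∑ k ∈ Icc 1 n, f k = ∑ k ∈ range n, f (k + 1) := by
  induction n with
  | zero => simp
  | succ n ih => rw [Finset.sum_Icc_succ_top (by omega), ih, Finset.sum_range_succ]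

noncomputable def Pl (t : ℝ) (c : ℕ) : ℝ := ∑ i ∈ Finset.range c, t ^ (i + 1) / (i + 1)

noncomputable def Cc (t L : ℝ) (j : ℕ) : ℝ :=
  ∑ i ∈ Finset.range j, (L * (t ^ (i + 1) - 1) + Pl t (i + 1)) / (i + 1)

section analytic
variable {t : ℝ} (ht0 : 0 < t) (ht1 : t < 1)
include ht0 ht1

lemma habs : |t| < 1 := abs_lt.2 ⟨by linarith, ht1⟩

lemma hasSum_logser : HasSum (fun k : ℕ => t ^ (k + 1) / (k + 1)) (-Real.log (1 - t)) :=
  Real.hasSum_pow_div_log_of_abs_lt_one (habs ht0 ht1)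

lemma hasSum_tail (c : ℕ) :
    HasSum (fun k : ℕ => t ^ (k + c + 1) / ((k : ℝ) + c + 1)) (-Real.log (1 - t) - Pl t c) := by
  have h0 := hasSum_logser ht0 ht1
  have := (hasSum_nat_add_iff (f := fun k : ℕ => t ^ (k + 1) / (k + 1))
      (g := -Real.log (1 - t) - Pl t c) c).2 (by
    have : -Real.log (1 - t) - Pl t c + ∑ i ∈ range c, t ^ (i + 1) / ((i : ℝ) + 1)
        = -Real.log (1 - t) := by simp [Pl]
    rw [this]; exact h0)
  refine this.congr_fun fun k => ?_
  push_cast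
  norm_num

lemma summable_norm_logser : Summable fun k : ℕ => ‖t ^ (k + 1) / ((k : ℝ) + 1)‖ := by
  have h1 : Summable fun k : ℕ => |t| ^ (k + 1) :=
    ((summable_geometric_of_lt_one (abs_nonneg t) (habs ht0 ht1)).mul_left |t|).congr
      (fun k => by rw [pow_succ, mul_comm])
  refine h1.of_nonneg_of_le (fun k => norm_nonneg _) fun k => ?_
  rw [norm_div, norm_pow, Real.norm_eq_abs, Real.norm_eq_abs]
  have hk : (1 : ℝ) ≤ |(k : ℝ) + 1| := by
    rw [abs_of_nonneg (by positivity)]; linarith [Nat.cast_nonneg (α := ℝ) k]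
  calc |t| ^ (k + 1) / |(k : ℝ) + 1| ≤ |t| ^ (k + 1) / 1 := by
        apply div_le_div_of_nonneg_left (by positivity) one_pos hk |>.trans_eq rfl
    _ = |t| ^ (k + 1) := by ring

end analytic

/-- finite convolution identity -/
lemma conv_id (n : ℕ) :
    ∑ k ∈ range (n + 1), 1 / (((k : ℝ) + 1) * ((n : ℝ) - k + 1))
      = 2 * H (n + 1) / ((n : ℝ) + 2) := by
  have key : ∀ k ∈ range (n + 1), 1 / (((k : ℝ) + 1) * ((n : ℝ) - k + 1))
      = (1 / ((n : ℝ) + 2)) * (1 / ((k : ℝ) + 1) + 1 / ((n : ℝ) - k + 1)) := by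
    intro k hk
    have hk' : (k : ℝ) ≤ n := by exact_mod_cast Nat.lt_succ_iff.1 (mem_range.1 hk)
    have h1 : (k : ℝ) + 1 ≠ 0 := by positivity
    have h2 : (n : ℝ) - k + 1 > 0 := by linarith
    have h3 : (n : ℝ) + 2 ≠ 0 := by positivity
    field_simp
    ring
  rw [Finset.sum_congr rfl key, ← Finset.mul_sum, Finset.sum_add_distrib]
  have hrefl : ∑ k ∈ range (n + 1), 1 / ((n : ℝ) - k + 1)
      = ∑ k ∈ range (n + 1), 1 / ((k : ℝ) + 1) := by
    rw [← Finset.sum_range_reflect (fun j => 1 / ((j : ℝ) + 1)) (n + 1)]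
    refine Finset.sum_congr rfl fun k hk => ?_
    have hk' : k ≤ n := Nat.lt_succ_iff.1 (mem_range.1 hk)
    have h2 : n + 1 - 1 - k = n - k := by omega
    rw [h2, Nat.cast_sub hk']
  have hH : ∑ k ∈ range (n + 1), 1 / ((k : ℝ) + 1) = H (n + 1) := by
    simp [H]
  rw [hrefl, hH]
  ring

section analytic
variable {t : ℝ} (ht0 : 0 < t) (ht1 : t < 1)

lemma hasSum_HB0 (hlog : HasSum (fun k : ℕ => t ^ (k + 1) / (k + 1)) (-Real.log (1 - t)))
    (hnorm : Summable fun k : ℕ => ‖t ^ (k + 1) / ((k : ℝ) + 1)‖) :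
    HasSum (fun k : ℕ => H k * t ^ (k + 1) / ((k : ℝ) + 1)) (Real.log (1 - t) ^ 2 / 2) := by
  have hmul := hasSum_sum_range_mul_of_summable_norm hnorm hnorm
  rw [hlog.tsum_eq] at hmul
  have hconv : ∀ m : ℕ, (∑ k ∈ range (m + 1),
      (t ^ (k + 1) / ((k : ℝ) + 1)) * (t ^ (m - k + 1) / ((m - k : ℕ) + 1)))
      = 2 * H (m + 1) * t ^ (m + 2) / ((m : ℝ) + 2) := by
    intro m
    have : ∀ k ∈ range (m + 1),
        (t ^ (k + 1) / ((k : ℝ) + 1)) * (t ^ (m - k + 1) / ((m - k : ℕ) + 1))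
        = t ^ (m + 2) * (1 / (((k : ℝ) + 1) * ((m : ℝ) - k + 1))) := by
      intro k hk
      have hk' : k ≤ m := Nat.lt_succ_iff.1 (mem_range.1 hk)
      have hpow : (k + 1) + (m - k + 1) = m + 2 := by omega
      rw [div_mul_div_comm, ← pow_add, hpow, Nat.cast_sub hk']
      ring
    rw [Finset.sum_congr rfl this, ← Finset.mul_sum, conv_id]
    ring
  have hmul2 : HasSum (fun m : ℕ => 2 * H (m + 1) * t ^ (m + 2) / ((m : ℝ) + 2))
      (Real.log (1 - t) ^ 2) := by
    have := hmul.congr_fun (fun m => (hconv m).symm)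
    convert this using 1
    · rfl
    · ring
  have hdiv := hmul2.div_const 2
  have hshift := (hasSum_nat_add_iff (f := fun k : ℕ => H k * t ^ (k + 1) / ((k : ℝ) + 1))
      (g := Real.log (1 - t) ^ 2 / 2) 1).1 (by
    refine hdiv.congr_fun fun m => ?_
    push_cast
    ring)
  rw [show ∑ i ∈ range 1, H i * t ^ (i + 1) / ((i : ℝ) + 1) = 0 by simp [H_zero]] at hshift
  simpa using hshift

end analytic
section analytic2
variable {t : ℝ} (ht0 : 0 < t) (ht1 : t < 1)
include ht0 ht1

lemma hasSum_B (j : ℕ) :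
    HasSum (fun k : ℕ => H k * t ^ (k + 1 + j) / ((k : ℝ) + 1 + j))
      (Real.log (1 - t) ^ 2 / 2 - Cc t (-Real.log (1 - t)) j) := by
  set L := -Real.log (1 - t) with hL
  induction j with
  | zero =>
      simpa [Cc] using hasSum_HB0 (hasSum_logser ht0 ht1) (summable_norm_logser ht0 ht1)
  | succ j ih =>
      have h1 : HasSum (fun k : ℕ => H (k + 1) * t ^ (k + j + 2) / ((k : ℝ) + j + 2))
          (Real.log (1 - t) ^ 2 / 2 - Cc t L j) := by
        have hs := (hasSum_nat_add_iff
            (f := fun k : ℕ => H k * t ^ (k + 1 + j) / ((k : ℝ) + 1 + j))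
            (g := Real.log (1 - t) ^ 2 / 2 - Cc t L j) 1).2 (by simpa [H_zero] using ih)
        refine hs.congr_fun fun k => ?_
        push_cast
        ring
      have h2 : HasSum (fun k : ℕ => t ^ (k + j + 2) / (((k : ℝ) + 1) * ((k : ℝ) + j + 2)))
          ((L * (t ^ (j + 1) - 1) + Pl t (j + 1)) / ((j : ℝ) + 1)) := by
        have ha := (((hasSum_logser ht0 ht1).mul_left (t ^ (j + 1))).sub
            (hasSum_tail ht0 ht1 (j + 1))).div_const ((j : ℝ) + 1)
        have hval : (t ^ (j + 1) * L - (L - Pl t (j + 1))) / ((j : ℝ) + 1)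
            = (L * (t ^ (j + 1) - 1) + Pl t (j + 1)) / ((j : ℝ) + 1) := by ring_nf
        rw [hval] at ha
        refine ha.congr_fun fun k => ?_
        have e1 : ((k : ℝ) + 1) ≠ 0 := by positivity
        have e2 : ((k : ℝ) + j + 2) ≠ 0 := by positivity
        have e3 : ((j : ℝ) + 1) ≠ 0 := by positivity
        have e4 : ((k : ℝ) + (j + 1) + 1) = (k : ℝ) + j + 2 := by push_cast; ring
        push_cast
        rw [show (k : ℝ) + ((j : ℝ) + 1) + 1 = (k : ℝ) + j + 2 by ring]
        field_simp
        ring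
      have h3 := h1.sub h2
      have hval2 : Real.log (1 - t) ^ 2 / 2 - Cc t L j
            - (L * (t ^ (j + 1) - 1) + Pl t (j + 1)) / ((j : ℝ) + 1)
          = Real.log (1 - t) ^ 2 / 2 - Cc t L (j + 1) := by
        simp only [Cc, Finset.sum_range_succ]
        push_cast
        ring
      rw [hval2] at h3
      refine h3.congr_fun fun k => ?_
      have e1 : ((k : ℝ) + 1) ≠ 0 := by positivity
      have e2 : ((k : ℝ) + j + 2) ≠ 0 := by positivity
      rw [H_succ]
      push_cast
      rw [show (k : ℝ) + 1 + ((j : ℝ) + 1) = (k : ℝ) + j + 2 by ring,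
        show k + 1 + (j + 1) = k + j + 2 from by omega]
      field_simp
      ring

lemma hasSum_Aj (j : ℕ) :
    HasSum (fun k : ℕ => H k * t ^ (k + 1) / ((k : ℝ) + 1 + j))
      ((Real.log (1 - t) ^ 2 / 2 - Cc t (-Real.log (1 - t)) j) / t ^ j) := by
  refine ((hasSum_B ht0 ht1 j).div_const (t ^ j)).congr_fun fun k => ?_
  have htj : (t : ℝ) ^ j ≠ 0 := pow_ne_zero _ (ne_of_gt ht0)
  have e2 : ((k : ℝ) + 1 + j) ≠ 0 := by positivity
  rw [show t ^ (k + 1 + j) = t ^ (k + 1) * t ^ j from pow_add t (k + 1) j]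
  field_simp

end analytic2
lemma pf_real (n : ℕ) : ∀ x : ℝ, 0 < x →
    ∑ j ∈ Finset.range (n + 1), (-1 : ℝ) ^ j * (n.choose j) / (x + j)
      = (n.factorial : ℝ) / ∏ i ∈ Finset.range (n + 1), (x + i) := by
  induction n with
  | zero => intro x hx; simp
  | succ n ih =>
      intro x hx
      have hx1 : (0 : ℝ) < x + 1 := by linarith
      have key : ∑ j ∈ range (n + 2), (-1 : ℝ) ^ j * ((n + 1).choose j) / (x + j)
          = (∑ j ∈ range (n + 1), (-1 : ℝ) ^ j * (n.choose j) / (x + j))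
            - ∑ j ∈ range (n + 1), (-1 : ℝ) ^ j * (n.choose j) / (x + 1 + j) := by
        rw [Finset.sum_range_succ']
        have hterm : ∀ j ∈ range (n + 1),
            (-1 : ℝ) ^ (j + 1) * (((n + 1).choose (j + 1) : ℕ) : ℝ) / (x + (j + 1 : ℕ))
            = -((-1 : ℝ) ^ j * (n.choose j) / (x + 1 + j))
              - (-1 : ℝ) ^ j * (n.choose (j + 1)) / (x + (j + 1 : ℕ)) := by
          intro j hj
          rw [Nat.choose_succ_succ]
          push_cast
          have : x + ((j : ℝ) + 1) ≠ 0 := by positivity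
          field_simp
          ring
        rw [Finset.sum_congr rfl hterm, Finset.sum_sub_distrib]
        have hB : ∑ j ∈ range (n + 1), (-1 : ℝ) ^ j * (n.choose (j + 1)) / (x + (j + 1 : ℕ))
            = 1 / x - ∑ j ∈ range (n + 1), (-1 : ℝ) ^ j * (n.choose j) / (x + j) := by
          have hgn : (-1 : ℝ) ^ n * ((n.choose (n + 1) : ℕ) : ℝ) / (x + ((n + 1 : ℕ) : ℝ)) = 0 := by
            simp [Nat.choose_succ_self]
          have hfx : ∑ j ∈ range (n + 1), (-1 : ℝ) ^ j * (n.choose j) / (x + j)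
              = -(∑ j ∈ range (n + 1), (-1 : ℝ) ^ j * (n.choose (j + 1)) / (x + (j + 1 : ℕ)))
                + 1 / x := by
            rw [Finset.sum_range_succ']
            have hstep : ∀ j ∈ range n, (-1 : ℝ) ^ (j + 1) * ((n.choose (j + 1) : ℕ) : ℝ) / (x + ((j + 1 : ℕ) : ℝ))
                = -((-1 : ℝ) ^ j * (n.choose (j + 1)) / (x + (j + 1 : ℕ))) := by
              intro j _
              rw [pow_succ]
              ring
            rw [Finset.sum_congr rfl hstep, Finset.sum_neg_distrib,
              Finset.sum_range_succ (fun j => (-1 : ℝ) ^ j * (n.choose (j + 1)) / (x + (j + 1 : ℕ))), hgn,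
              add_zero]
            simp
          rw [hfx]; ring
        rw [hB, Finset.sum_neg_distrib]
        simp only [Nat.choose_zero_right, Nat.cast_one, Nat.cast_zero, add_zero, one_mul, pow_zero]
        ring
      rw [key, ih x hx, ih (x + 1) hx1]
      have hApos : (0 : ℝ) < ∏ i ∈ range (n + 1), (x + i) :=
        Finset.prod_pos fun i _ => by positivity
      have hBpos : (0 : ℝ) < ∏ i ∈ range (n + 1), (x + 1 + i) :=
        Finset.prod_pos fun i _ => by positivity
      have hDpos : (0 : ℝ) < ∏ i ∈ range (n + 2), (x + i) :=
        Finset.prod_pos fun i _ => by positivity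
      have hD1 : ∏ i ∈ range (n + 2), (x + i)
          = (∏ i ∈ range (n + 1), (x + i)) * (x + (n + 1)) := by
        rw [Finset.prod_range_succ]; push_cast; ring
      have hD2 : ∏ i ∈ range (n + 2), (x + i)
          = x * ∏ i ∈ range (n + 1), (x + 1 + i) := by
        rw [Finset.prod_range_succ']
        have : ∀ i ∈ range (n + 1), (x + ((i + 1 : ℕ) : ℝ)) = x + 1 + i := by
          intro i _; push_cast; ring
        rw [Finset.prod_congr rfl this]
        push_cast; ring
      rw [eq_div_iff (ne_of_gt hDpos), sub_mul]
      have e1 : (n.factorial : ℝ) / (∏ i ∈ range (n + 1), (x + i)) * ∏ i ∈ range (n + 2), (x + i)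
          = (n.factorial : ℝ) * (x + n + 1) := by
        rw [hD1]
        field_simp
        ring
      have e2 : (n.factorial : ℝ) / (∏ i ∈ range (n + 1), (x + 1 + i)) * ∏ i ∈ range (n + 2), (x + i)
          = (n.factorial : ℝ) * x := by
        rw [hD2]
        field_simp
      rw [e1, e2]
      rw [Nat.factorial_succ]
      push_cast
      ring

lemma prod_shift (n k : ℕ) :
    (∏ i ∈ Finset.range (n + 1), ((k : ℝ) + 1 + i)) * (k.factorial : ℝ)
      = ((n + k + 1).factorial : ℝ) := by
  induction n with
  | zero =>
      rw [Finset.prod_range_one, show 0 + k + 1 = k + 1 from by omega, Nat.factorial_succ k]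
      push_cast
      ring
  | succ n ih =>
      rw [Finset.prod_range_succ, mul_right_comm, ih,
        show n + 1 + k + 1 = (n + k + 1) + 1 from by omega, Nat.factorial_succ (n + k + 1)]
      push_cast
      ring

lemma pf_choose (n k : ℕ) :
    1 / (((k : ℝ) + 1) * (((n + (k + 1)).choose (k + 1) : ℕ) : ℝ))
      = ∑ j ∈ Finset.range (n + 1), (-1 : ℝ) ^ j * (n.choose j) / ((k : ℝ) + 1 + j) := by
  rw [pf_real n ((k : ℝ) + 1) (by positivity)]
  have hch : ((n + (k + 1)).choose (k + 1)) * (k + 1).factorial * n.factorial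
      = (n + k + 1).factorial := by
    have h := Nat.choose_mul_factorial_mul_factorial (n := n + (k + 1)) (k := k + 1) (by omega)
    rw [show n + (k + 1) - (k + 1) = n from by omega] at h
    rw [show n + (k + 1) = n + k + 1 from by omega] at h
    exact h
  have hprod := prod_shift n k
  have hchpos : 0 < ((n + (k + 1)).choose (k + 1)) := Nat.choose_pos (by omega)
  have hne1 : ((k : ℝ) + 1) ≠ 0 := by positivity
  have hne2 : (((n + (k + 1)).choose (k + 1) : ℕ) : ℝ) ≠ 0 := Nat.cast_ne_zero.mpr hchpos.ne'
  have hprodpos : (0 : ℝ) < ∏ i ∈ range (n + 1), ((k : ℝ) + 1 + i) :=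
    Finset.prod_pos fun i _ => by positivity
  have hkf : (k.factorial : ℝ) ≠ 0 := by exact_mod_cast k.factorial_ne_zero
  have hnf : (n.factorial : ℝ) ≠ 0 := by exact_mod_cast n.factorial_ne_zero
  have hch' : (((n + (k + 1)).choose (k + 1) : ℕ) : ℝ) * ((k + 1).factorial : ℝ) * (n.factorial : ℝ)
      = ((n + k + 1).factorial : ℝ) := by exact_mod_cast congrArg Nat.cast hch
  rw [← hprod] at hch'
  rw [Nat.factorial_succ] at hch'
  push_cast at hch'
  rw [eq_comm, div_eq_div_iff (ne_of_gt hprodpos) (mul_ne_zero hne1 hne2)]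
  refine mul_right_cancel₀ hkf ?_
  linear_combination hch'
section assembly
variable {t : ℝ} (ht0 : 0 < t) (ht1 : t < 1)
include ht0 ht1

lemma tsum_eq_phi (n : ℕ) :
    ∑' k : ℕ, H k * t ^ (k + 1) / (((k : ℝ) + 1) * (((n + (k + 1)).choose (k + 1) : ℕ) : ℝ))
      = ∑ j ∈ Finset.range (n + 1), (-1 : ℝ) ^ j * (n.choose j)
          * ((Real.log (1 - t) ^ 2 / 2 - Cc t (-Real.log (1 - t)) j) / t ^ j) := by
  have hterm : ∀ k : ℕ, H k * t ^ (k + 1) / (((k : ℝ) + 1) * (((n + (k + 1)).choose (k + 1) : ℕ) : ℝ))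
      = ∑ j ∈ Finset.range (n + 1),
          (-1 : ℝ) ^ j * (n.choose j) * (H k * t ^ (k + 1) / ((k : ℝ) + 1 + j)) := by
    intro k
    have h1 : H k * t ^ (k + 1) / (((k : ℝ) + 1) * (((n + (k + 1)).choose (k + 1) : ℕ) : ℝ))
        = (H k * t ^ (k + 1)) * (1 / (((k : ℝ) + 1) * (((n + (k + 1)).choose (k + 1) : ℕ) : ℝ))) := by
      ring
    rw [h1, pf_choose, Finset.mul_sum]
    refine Finset.sum_congr rfl fun j _ => ?_
    ring
  rw [tsum_congr hterm]
  rw [Summable.tsum_finsetSum (fun j _ => ((hasSum_Aj ht0 ht1 j).mul_left ((-1 : ℝ) ^ j * (n.choose j))).summable)]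
  exact Finset.sum_congr rfl fun j _ =>
    ((hasSum_Aj ht0 ht1 j).mul_left ((-1 : ℝ) ^ j * (n.choose j))).tsum_eq

end assembly
lemma pascal_sum (m : ℕ) (ψ : ℕ → ℝ) :
    ∑ j ∈ Finset.range (m + 2), (-1 : ℝ) ^ j * ((m + 1).choose j) * ψ j
      = ∑ j ∈ Finset.range (m + 1), (-1 : ℝ) ^ j * (m.choose j) * ψ j
        - ∑ j ∈ Finset.range (m + 1), (-1 : ℝ) ^ j * (m.choose j) * ψ (j + 1) := by
  rw [Finset.sum_range_succ']
  have hterm : ∀ j ∈ range (m + 1),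
      (-1 : ℝ) ^ (j + 1) * (((m + 1).choose (j + 1) : ℕ) : ℝ) * ψ (j + 1)
      = -((-1 : ℝ) ^ j * (m.choose j) * ψ (j + 1)) - (-1 : ℝ) ^ j * (m.choose (j + 1)) * ψ (j + 1) := by
    intro j _
    rw [Nat.choose_succ_succ]
    push_cast
    ring
  rw [Finset.sum_congr rfl hterm, Finset.sum_sub_distrib, Finset.sum_neg_distrib]
  have hB : ∑ j ∈ range (m + 1), (-1 : ℝ) ^ j * (m.choose (j + 1)) * ψ (j + 1)
      = ψ 0 - ∑ j ∈ range (m + 1), (-1 : ℝ) ^ j * (m.choose j) * ψ j := by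
    have hgn : (-1 : ℝ) ^ m * ((m.choose (m + 1) : ℕ) : ℝ) * ψ (m + 1) = 0 := by
      simp [Nat.choose_succ_self]
    have hfx : ∑ j ∈ range (m + 1), (-1 : ℝ) ^ j * (m.choose j) * ψ j
        = -(∑ j ∈ range (m + 1), (-1 : ℝ) ^ j * (m.choose (j + 1)) * ψ (j + 1)) + ψ 0 := by
      rw [Finset.sum_range_succ']
      have hstep : ∀ j ∈ range m,
          (-1 : ℝ) ^ (j + 1) * ((m.choose (j + 1) : ℕ) : ℝ) * ψ (j + 1)
          = -((-1 : ℝ) ^ j * (m.choose (j + 1)) * ψ (j + 1)) := by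
        intro j _; rw [pow_succ]; ring
      rw [Finset.sum_congr rfl hstep, Finset.sum_neg_distrib,
        Finset.sum_range_succ (fun j => (-1 : ℝ) ^ j * (m.choose (j + 1)) * ψ (j + 1)), hgn,
        add_zero]
      simp
    rw [hfx]; ring
  rw [hB]
  simp only [Nat.choose_zero_right, Nat.cast_one, Nat.cast_zero, pow_zero]
  push_cast
  ring

lemma bin_inv (m : ℕ) (x : ℝ) (hx : x ≠ 0) :
    ∑ j ∈ Finset.range (m + 1), (-1 : ℝ) ^ j * (m.choose j) * x ^ j / ((j : ℝ) + 1)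
      = (1 - (1 - x) ^ (m + 1)) / (((m : ℝ) + 1) * x) := by
  have key : ∀ j ∈ range (m + 1),
      ((m : ℝ) + 1) * x * ((-1 : ℝ) ^ j * (m.choose j) * x ^ j / ((j : ℝ) + 1))
      = -((((m + 1).choose (j + 1) : ℕ) : ℝ) * (-x) ^ (j + 1)) := by
    intro j _
    have hc := congrArg (Nat.cast : ℕ → ℝ) (Nat.add_one_mul_choose_eq m j)
    push_cast at hc
    have hj : ((j : ℝ) + 1) ≠ 0 := by positivity
    rw [neg_pow]
    field_simp
    linear_combination ((-1 : ℝ) ^ j * (x * x ^ j)) * hc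
  have hsum : ((m : ℝ) + 1) * x * (∑ j ∈ range (m + 1), (-1 : ℝ) ^ j * (m.choose j) * x ^ j / ((j : ℝ) + 1))
      = 1 - (1 - x) ^ (m + 1) := by
    rw [Finset.mul_sum, Finset.sum_congr rfl key, Finset.sum_neg_distrib]
    have hbin : ((-x) + 1) ^ (m + 1)
        = ∑ j ∈ range (m + 2), (-x) ^ j * 1 ^ (m + 1 - j) * ((m + 1).choose j) := add_pow (-x) 1 (m + 1)
    rw [Finset.sum_range_succ'] at hbin
    simp only [one_pow, mul_one, pow_zero, one_mul, Nat.choose_zero_right, Nat.cast_one] at hbin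
    have : ∑ j ∈ range (m + 1), (((m + 1).choose (j + 1) : ℕ) : ℝ) * (-x) ^ (j + 1)
        = ((-x) + 1) ^ (m + 1) - 1 := by
      rw [hbin]
      have : ∀ j ∈ range (m + 1), (-x) ^ (j + 1) * (((m + 1).choose (j + 1) : ℕ) : ℝ)
          = (((m + 1).choose (j + 1) : ℕ) : ℝ) * (-x) ^ (j + 1) := fun j _ => mul_comm _ _
      rw [Finset.sum_congr rfl this]
      ring
    rw [this]
    have hx1 : (-x) + 1 = 1 - x := by ring
    rw [hx1]
    ring
  have hne : (((m : ℝ) + 1) * x) ≠ 0 := mul_ne_zero (by positivity) hx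
  field_simp [eq_div_iff hne]
  linear_combination hsum
lemma bc1 (m : ℕ) :
    ∑ j ∈ Finset.range (m + 1), (-1 : ℝ) ^ j * (m.choose j) / ((j : ℝ) + 1)
      = 1 / ((m : ℝ) + 1) := by
  have h := bin_inv m 1 one_ne_zero
  simp only [one_pow, mul_one, sub_self] at h
  rw [zero_pow (Nat.succ_ne_zero m)] at h
  simpa using h

section alg
variable {t : ℝ} (ht : t ≠ 0)
include ht

lemma bc2 (m : ℕ) :
    ∑ j ∈ Finset.range (m + 1), (-1 : ℝ) ^ j * (m.choose j) * (1 / t) ^ j / ((j : ℝ) + 1)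
      = t * (1 - ((t - 1) / t) ^ (m + 1)) / ((m : ℝ) + 1) := by
  have h := bin_inv m (1 / t) (one_div_ne_zero ht)
  rw [h]
  rw [show (1 : ℝ) - 1 / t = (t - 1) / t by field_simp]
  rw [div_eq_div_iff (by positivity) (by positivity : ((m : ℝ) + 1) ≠ 0)]
  field_simp

lemma Glem (m : ℕ) :
    ∑ j ∈ Finset.range (m + 1), (-1 : ℝ) ^ j * (m.choose j) * (Pl t j / t ^ j)
      = -∑ i ∈ Finset.Icc 1 m, ((t - 1) / t) ^ (m - i) / (i : ℝ) := by
  induction m with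
  | zero => simp [Pl]
  | succ m ih =>
      rw [pascal_sum m (fun j => Pl t j / t ^ j)]
      have hψ : ∀ j ∈ range (m + 1), (-1 : ℝ) ^ j * (m.choose j) * (Pl t (j + 1) / t ^ (j + 1))
          = (1 / t) * ((-1 : ℝ) ^ j * (m.choose j) * (Pl t j / t ^ j))
            + (-1 : ℝ) ^ j * (m.choose j) / ((j : ℝ) + 1) := by
        intro j _
        have htj : t ^ j ≠ 0 := pow_ne_zero _ ht
        have hPl : Pl t (j + 1) = Pl t j + t ^ (j + 1) / ((j : ℝ) + 1) := by
          simp [Pl, Finset.sum_range_succ]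
        rw [hPl, pow_succ]
        have hj : ((j : ℝ) + 1) ≠ 0 := by positivity
        field_simp
      rw [Finset.sum_congr rfl hψ, Finset.sum_add_distrib, ← Finset.mul_sum, bc1, ih]
      rw [Finset.sum_Icc_succ_top (Nat.one_le_iff_ne_zero.2 (Nat.succ_ne_zero m))]
      have hu : ∀ i ∈ Finset.Icc 1 m, ((t - 1) / t) ^ (m + 1 - i) / (i : ℝ)
          = ((t - 1) / t) * (((t - 1) / t) ^ (m - i) / (i : ℝ)) := by
        intro i hi
        have h1 : 1 ≤ i ∧ i ≤ m := Finset.mem_Icc.1 hi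
        rw [show m + 1 - i = (m - i) + 1 from by omega, pow_succ]
        ring
      rw [Finset.sum_congr rfl hu, ← Finset.mul_sum]
      have : (1 : ℝ) - 1 / t = (t - 1) / t := by field_simp
      rw [show m + 1 - (m + 1) = 0 from by omega, pow_zero]
      field_simp
      push_cast
      ring

end alg
section alg2
variable {t : ℝ} (ht : t ≠ 0)
include ht

lemma Elem (n : ℕ) :
    ∑ j ∈ Finset.range (n + 1), (-1 : ℝ) ^ j * (n.choose j) * (Pl t (j + 1) / (((j : ℝ) + 1) * t ^ j))
      = (t / ((n : ℝ) + 1)) * ∑ i ∈ Finset.Icc 1 (n + 1), ((t - 1) / t) ^ (n + 1 - i) / (i : ℝ) := by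
  have hG := Glem ht (n + 1)
  rw [Finset.sum_range_succ'] at hG
  have h0 : (-1 : ℝ) ^ 0 * (((n + 1).choose 0 : ℕ) : ℝ) * (Pl t 0 / t ^ 0) = 0 := by simp [Pl]
  rw [h0, add_zero] at hG
  have hterm : ∀ j ∈ range (n + 1),
      (-1 : ℝ) ^ j * (n.choose j) * (Pl t (j + 1) / (((j : ℝ) + 1) * t ^ j))
      = (-(t / ((n : ℝ) + 1))) *
        ((-1 : ℝ) ^ (j + 1) * (((n + 1).choose (j + 1) : ℕ) : ℝ) * (Pl t (j + 1) / t ^ (j + 1))) := by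
    intro j _
    have hc := congrArg (Nat.cast : ℕ → ℝ) (Nat.add_one_mul_choose_eq n j)
    push_cast at hc
    have hj : ((j : ℝ) + 1) ≠ 0 := by positivity
    have hn1 : ((n : ℝ) + 1) ≠ 0 := by positivity
    have htj : t ^ j ≠ 0 := pow_ne_zero _ ht
    rw [pow_succ, pow_succ]
    field_simp
    linear_combination (Pl t (j + 1)) * hc
  rw [Finset.sum_congr rfl hterm, ← Finset.mul_sum, hG]
  ring

lemma philem (L : ℝ) (n : ℕ) :
    ∑ j ∈ Finset.range (n + 1), (-1 : ℝ) ^ j * (n.choose j) * ((L ^ 2 / 2 - Cc t L j) / t ^ j)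
      = ((t - 1) / t) ^ n * L ^ 2 / 2 + L * H n * ((t - 1) / t) ^ n
        + ∑ i ∈ Finset.Icc 1 n, ((t - 1) / t) ^ (n - i) * (H n - H (i - 1)) / (i : ℝ) := by
  induction n with
  | zero => simp [Cc, H_zero]
  | succ n ih =>
      rw [pascal_sum n (fun j => (L ^ 2 / 2 - Cc t L j) / t ^ j)]
      have hψ : ∀ j ∈ range (n + 1),
          (-1 : ℝ) ^ j * (n.choose j) * ((L ^ 2 / 2 - Cc t L (j + 1)) / t ^ (j + 1))
          = (1 / t) * ((-1 : ℝ) ^ j * (n.choose j) * ((L ^ 2 / 2 - Cc t L j) / t ^ j))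
            - (1 / t) * (L * ((-1 : ℝ) ^ j * (n.choose j) * ((t ^ (j + 1) - 1) / (((j : ℝ) + 1) * t ^ j)))
                + (-1 : ℝ) ^ j * (n.choose j) * (Pl t (j + 1) / (((j : ℝ) + 1) * t ^ j))) := by
        intro j _
        have hCc : Cc t L (j + 1) = Cc t L j + (L * (t ^ (j + 1) - 1) + Pl t (j + 1)) / ((j : ℝ) + 1) := by
          simp [Cc, Finset.sum_range_succ]
        rw [hCc, pow_succ]
        have hj : ((j : ℝ) + 1) ≠ 0 := by positivity
        have htj : t ^ j ≠ 0 := pow_ne_zero _ ht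
        field_simp
        ring
      rw [Finset.sum_congr rfl hψ, Finset.sum_sub_distrib, ← Finset.mul_sum, ← Finset.mul_sum]
      have hsplit : ∑ j ∈ range (n + 1),
          (L * ((-1 : ℝ) ^ j * (n.choose j) * ((t ^ (j + 1) - 1) / (((j : ℝ) + 1) * t ^ j)))
            + (-1 : ℝ) ^ j * (n.choose j) * (Pl t (j + 1) / (((j : ℝ) + 1) * t ^ j)))
          = L * ∑ j ∈ range (n + 1), (-1 : ℝ) ^ j * (n.choose j) * ((t ^ (j + 1) - 1) / (((j : ℝ) + 1) * t ^ j))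
            + ∑ j ∈ range (n + 1), (-1 : ℝ) ^ j * (n.choose j) * (Pl t (j + 1) / (((j : ℝ) + 1) * t ^ j)) := by
        rw [Finset.sum_add_distrib, Finset.mul_sum]
      rw [hsplit, Elem ht n]
      have hX : ∑ j ∈ range (n + 1), (-1 : ℝ) ^ j * (n.choose j) * ((t ^ (j + 1) - 1) / (((j : ℝ) + 1) * t ^ j))
          = t * ((t - 1) / t) ^ (n + 1) / ((n : ℝ) + 1) := by
        have hXterm : ∀ j ∈ range (n + 1),
            (-1 : ℝ) ^ j * (n.choose j) * ((t ^ (j + 1) - 1) / (((j : ℝ) + 1) * t ^ j))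
            = t * ((-1 : ℝ) ^ j * (n.choose j) / ((j : ℝ) + 1))
              - (-1 : ℝ) ^ j * (n.choose j) * (1 / t) ^ j / ((j : ℝ) + 1) := by
          intro j _
          have hj : ((j : ℝ) + 1) ≠ 0 := by positivity
          have htj : t ^ j ≠ 0 := pow_ne_zero _ ht
          rw [pow_succ, one_div, inv_pow]
          field_simp
        rw [Finset.sum_congr rfl hXterm, Finset.sum_sub_distrib, ← Finset.mul_sum, bc1, bc2 ht]
        have hn1 : ((n : ℝ) + 1) ≠ 0 := by positivity
        field_simp
        ring
      rw [hX, ih]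
      -- now pure finite-sum algebra
      have hn1 : ((n : ℝ) + 1) ≠ 0 := by positivity
      have hW : ∑ i ∈ Finset.Icc 1 (n + 1), ((t - 1) / t) ^ (n + 1 - i) / (i : ℝ)
          = (∑ i ∈ Finset.Icc 1 n, ((t - 1) / t) ^ (n + 1 - i) / (i : ℝ)) + 1 / ((n : ℝ) + 1) := by
        rw [Finset.sum_Icc_succ_top (by omega), show n + 1 - (n + 1) = 0 from by omega, pow_zero]
        push_cast
        ring
      have hD' : ∑ i ∈ Finset.Icc 1 (n + 1), ((t - 1) / t) ^ (n + 1 - i) * (H (n + 1) - H (i - 1)) / (i : ℝ)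
          = (∑ i ∈ Finset.Icc 1 n, ((t - 1) / t) ^ (n + 1 - i) * (H n - H (i - 1)) / (i : ℝ))
            + (1 / ((n : ℝ) + 1)) * (∑ i ∈ Finset.Icc 1 n, ((t - 1) / t) ^ (n + 1 - i) / (i : ℝ))
            + 1 / ((n : ℝ) + 1) * (1 / ((n : ℝ) + 1)) := by
        rw [Finset.sum_Icc_succ_top (by omega), show n + 1 - (n + 1) = 0 from by omega, pow_zero,
          show (n + 1) - 1 = n from by omega]
        have hper : ∀ i ∈ Finset.Icc 1 n,
            ((t - 1) / t) ^ (n + 1 - i) * (H (n + 1) - H (i - 1)) / (i : ℝ)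
            = ((t - 1) / t) ^ (n + 1 - i) * (H n - H (i - 1)) / (i : ℝ)
              + (1 / ((n : ℝ) + 1)) * (((t - 1) / t) ^ (n + 1 - i) / (i : ℝ)) := by
          intro i hi
          have h1 : 1 ≤ i ∧ i ≤ n := Finset.mem_Icc.1 hi
          have hi0 : ((i : ℝ)) ≠ 0 := by
            have : 0 < i := h1.1
            positivity
          rw [H_succ]
          field_simp
          ring
        rw [Finset.sum_congr rfl hper, Finset.sum_add_distrib, ← Finset.mul_sum, H_succ]
        push_cast
        ring
      have hDshift : ∑ i ∈ Finset.Icc 1 n, ((t - 1) / t) ^ (n + 1 - i) * (H n - H (i - 1)) / (i : ℝ)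
          = ((t - 1) / t) * ∑ i ∈ Finset.Icc 1 n, ((t - 1) / t) ^ (n - i) * (H n - H (i - 1)) / (i : ℝ) := by
        rw [Finset.mul_sum]
        refine Finset.sum_congr rfl fun i hi => ?_
        have h1 : 1 ≤ i ∧ i ≤ n := Finset.mem_Icc.1 hi
        rw [show n + 1 - i = (n - i) + 1 from by omega, pow_succ]
        ring
      rw [hW, hD', hDshift, H_succ, pow_succ]
      generalize (∑ i ∈ Finset.Icc 1 n, ((t - 1) / t) ^ (n - i) * (H n - H (i - 1)) / (i : ℝ)) = A
      generalize (∑ i ∈ Finset.Icc 1 n, ((t - 1) / t) ^ (n + 1 - i) / (i : ℝ)) = B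
      simp only [div_pow]
      field_simp
      ring

end alg2
section match1
variable {t : ℝ} (ht : t ≠ 0)
include ht

lemma M1 (n : ℕ) : ∑ k ∈ Finset.Icc 1 n, ((t - 1) / t) ^ k = (1 - t) * (((t - 1) / t) ^ n - 1) := by
  induction n with
  | zero => simp
  | succ n ih =>
      rw [Finset.sum_Icc_succ_top (by omega), ih, pow_succ]
      field_simp
      ring

lemma M2 (n : ℕ) : ∑ k ∈ Finset.Icc 1 n, H k * ((t - 1) / t) ^ k
    = (1 - t) * H n * ((t - 1) / t) ^ n + t * ∑ k ∈ Finset.Icc 1 n, 1 / (k : ℝ) * ((t - 1) / t) ^ k := by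
  induction n with
  | zero => simp [H_zero]
  | succ n ih =>
      rw [Finset.sum_Icc_succ_top (by omega), Finset.sum_Icc_succ_top (by omega), ih, H_succ, pow_succ]
      have hn1 : ((n : ℝ) + 1) ≠ 0 := by positivity
      push_cast
      field_simp
      ring

end match1

noncomputable def cf (n p : ℕ) : ℝ :=
  ∑ k ∈ Finset.Icc 1 (n - p),
    ((H (p + k) - H k) / (((p : ℝ) + (k : ℝ)) * (k : ℝ)) + 1 / ((k : ℝ) ^ 2 * ((p : ℝ) + (k : ℝ))))

lemma CIstep (a b pp qq : ℝ) (h1 : qq + 1 ≠ 0) (h2 : qq + 2 ≠ 0) (h3 : pp + qq + 2 ≠ 0) :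
    (pp + 1) * ((a + 1 / (pp + qq + 2) - (b + 1 / (qq + 1))) / ((pp + qq + 2) * (qq + 1))
        + 1 / ((qq + 1) ^ 2 * (pp + qq + 2)))
      - pp * ((a + 1 / (pp + qq + 2) - (b + 1 / (qq + 1) + 1 / (qq + 2))) / ((pp + qq + 2) * (qq + 2))
        + 1 / ((qq + 2) ^ 2 * (pp + qq + 2)))
    = (a - b) / (qq + 1) - (a + 1 / (pp + qq + 2) - (b + 1 / (qq + 1))) / (qq + 2) := by
  field_simp
  ring

lemma CI (p : ℕ) : ∀ q : ℕ,
    ((p : ℝ) + 1) * cf (p + 1 + q) (p + 1) - (p : ℝ) * cf (p + 1 + q) p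
      = H (p + 1) / ((p : ℝ) + 1) - (H (p + 1 + q) - H q) / ((q : ℝ) + 1) := by
  intro q
  induction q with
  | zero =>
      have h1 : cf (p + 1 + 0) (p + 1) = 0 := by
        unfold cf
        rw [show p + 1 + 0 - (p + 1) = 0 from by omega]
        simp
      have h2 : cf (p + 1 + 0) p = H (p + 1) / ((p : ℝ) + 1) := by
        unfold cf
        rw [show p + 1 + 0 - p = 1 from by omega, Finset.Icc_self, Finset.sum_singleton]
        rw [show p + 1 + 0 = p + 1 from by omega] -- for H index? (p+k) with k=1 : H (p+1)
        have hp1 : ((p : ℝ) + 1) ≠ 0 := by positivity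
        rw [H_one]
        push_cast
        field_simp
        ring
      rw [h1, h2, show p + 1 + 0 = p + 1 from by omega, H_zero]
      have hp1 : ((p : ℝ) + 1) ≠ 0 := by positivity
      push_cast
      field_simp
      ring
  | succ q ihq =>
      have hq1 : ((q : ℝ) + 1) ≠ 0 := by positivity
      have hq2 : ((q : ℝ) + 2) ≠ 0 := by positivity
      have hp1 : ((p : ℝ) + 1) ≠ 0 := by positivity
      have hpq : ((p : ℝ) + (q : ℝ) + 2) ≠ 0 := by positivity
      have e1 : p + 1 + (q + 1) = (p + 1 + q) + 1 := by omega
      have hc1 : cf ((p + 1 + q) + 1) (p + 1) = cf (p + 1 + q) (p + 1)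
          + ((H ((p + 1 + q) + 1) - H (q + 1)) / (((p : ℝ) + (q : ℝ) + 2) * ((q : ℝ) + 1))
            + 1 / (((q : ℝ) + 1) ^ 2 * ((p : ℝ) + (q : ℝ) + 2))) := by
        unfold cf
        rw [show (p + 1 + q) + 1 - (p + 1) = q + 1 from by omega,
          show (p + 1 + q) - (p + 1) = q from by omega,
          Finset.sum_Icc_succ_top (by omega)]
        congr 2
        · rw [show (p + 1) + (q + 1) = (p + 1 + q) + 1 from by omega]
          push_cast
          ring_nf
        · push_cast
          ring_nf
      have hc2 : cf ((p + 1 + q) + 1) p = cf (p + 1 + q) p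
          + ((H ((p + 1 + q) + 1) - H (q + 2)) / (((p : ℝ) + (q : ℝ) + 2) * ((q : ℝ) + 2))
            + 1 / (((q : ℝ) + 2) ^ 2 * ((p : ℝ) + (q : ℝ) + 2))) := by
        unfold cf
        rw [show (p + 1 + q) + 1 - p = q + 2 from by omega,
          show (p + 1 + q) - p = q + 1 from by omega,
          Finset.sum_Icc_succ_top (by omega)]
        congr 2
        · rw [show p + (q + 2) = (p + 1 + q) + 1 from by omega]
          push_cast
          ring_nf
        · push_cast
          ring_nf
      have hH1 : H ((p + 1 + q) + 1) = H (p + 1 + q) + 1 / ((p : ℝ) + (q : ℝ) + 2) := by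
        rw [H_succ]
        push_cast
        ring_nf
      have hH2 : H (q + 1) = H q + 1 / ((q : ℝ) + 1) := by rw [H_succ]
      have hH3 : H (q + 2) = H q + 1 / ((q : ℝ) + 1) + 1 / ((q : ℝ) + 2) := by
        rw [show q + 2 = (q + 1) + 1 from rfl, H_succ, H_succ]
        push_cast
        ring
      rw [e1, hc1, hc2, hH1, hH2, hH3]
      push_cast
      linear_combination ihq + CIstep (H (p + 1 + q)) (H q) (p : ℝ) (q : ℝ) hq1 hq2 hpq
lemma cf_diag (n : ℕ) : cf n n = 0 := by
  unfold cf
  rw [show n - n = 0 from by omega]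
  simp

lemma M3core (t : ℝ) (n : ℕ) :
    (∑ p ∈ Finset.range n, cf n p * (p : ℝ) * ((t - 1) / t) ^ p)
      - ((t - 1) / t) * ∑ p ∈ Finset.range n, cf n p * (p : ℝ) * ((t - 1) / t) ^ p
    = (∑ k ∈ Finset.Icc 1 n, H k / (k : ℝ) * ((t - 1) / t) ^ k)
      - ((t - 1) / t) *
        ∑ i ∈ Finset.Icc 1 n, ((t - 1) / t) ^ (n - i) * (H n - H (i - 1)) / (i : ℝ) := by
  set u := (t - 1) / t with hu
  have eshift : ∑ p ∈ Finset.range n, cf n p * (p : ℝ) * u ^ p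
      = ∑ p ∈ Finset.range n, cf n (p + 1) * ((p : ℝ) + 1) * u ^ (p + 1) := by
    have h1 : ∑ p ∈ Finset.range (n + 1), cf n p * (p : ℝ) * u ^ p
        = (∑ p ∈ Finset.range n, cf n p * (p : ℝ) * u ^ p) + cf n n * (n : ℝ) * u ^ n :=
      Finset.sum_range_succ _ n
    have h2 : ∑ p ∈ Finset.range (n + 1), cf n p * (p : ℝ) * u ^ p
        = (∑ p ∈ Finset.range n, cf n (p + 1) * (((p + 1 : ℕ)) : ℝ) * u ^ (p + 1))
          + cf n 0 * ((0 : ℕ) : ℝ) * u ^ 0 := Finset.sum_range_succ' _ n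
    rw [cf_diag] at h1
    have h3 : ∑ p ∈ Finset.range n, cf n (p + 1) * (((p + 1 : ℕ)) : ℝ) * u ^ (p + 1)
        = ∑ p ∈ Finset.range n, cf n (p + 1) * ((p : ℝ) + 1) * u ^ (p + 1) := by
      refine Finset.sum_congr rfl fun p _ => ?_
      push_cast
      ring
    rw [h3] at h2
    simp only [Nat.cast_zero, mul_zero, zero_mul, add_zero, mul_comm] at h1 h2
    nlinarith [h1, h2]
  have huSe : u * ∑ p ∈ Finset.range n, cf n p * (p : ℝ) * u ^ p
      = ∑ p ∈ Finset.range n, cf n p * (p : ℝ) * u ^ (p + 1) := by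
    rw [Finset.mul_sum]
    exact Finset.sum_congr rfl fun p _ => by rw [pow_succ]; ring
  have hSc : ∑ k ∈ Finset.Icc 1 n, H k / (k : ℝ) * u ^ k
      = ∑ p ∈ Finset.range n, H (p + 1) / ((p : ℝ) + 1) * u ^ (p + 1) := by
    rw [sum_Icc1]
    refine Finset.sum_congr rfl fun p _ => ?_
    push_cast
    ring
  have hD : ∑ i ∈ Finset.Icc 1 n, u ^ (n - i) * (H n - H (i - 1)) / (i : ℝ)
      = ∑ p ∈ Finset.range n, u ^ p * (H n - H (n - 1 - p)) / ((n : ℝ) - (p : ℝ)) := by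
    rw [sum_Icc1]
    rw [← Finset.sum_range_reflect (fun j => u ^ (n - (j + 1)) * (H n - H ((j + 1) - 1)) / (((j + 1 : ℕ)) : ℝ)) n]
    refine Finset.sum_congr rfl fun p hp => ?_
    have hpn : p < n := Finset.mem_range.1 hp
    rw [show n - (n - 1 - p + 1) = p from by omega,
      show n - 1 - p + 1 - 1 = n - 1 - p from by omega,
      show (((n - 1 - p + 1 : ℕ)) : ℝ) = (n : ℝ) - (p : ℝ) from by
        push_cast [Nat.cast_sub (by omega : p ≤ n - 1), Nat.cast_sub (by omega : 1 ≤ n)]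
        ring]
  have huD : u * ∑ i ∈ Finset.Icc 1 n, u ^ (n - i) * (H n - H (i - 1)) / (i : ℝ)
      = ∑ p ∈ Finset.range n, (H n - H (n - 1 - p)) / ((n : ℝ) - (p : ℝ)) * u ^ (p + 1) := by
    rw [hD, Finset.mul_sum]
    exact Finset.sum_congr rfl fun p _ => by rw [pow_succ]; ring
  rw [huSe, huD, hSc]
  conv_lhs => rw [eshift]
  rw [← Finset.sum_sub_distrib, ← Finset.sum_sub_distrib]
  refine Finset.sum_congr rfl fun p hp => ?_
  have hpn : p < n := Finset.mem_range.1 hp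
  have hci := CI p (n - 1 - p)
  rw [show p + 1 + (n - 1 - p) = n from by omega] at hci
  rw [show (((n - 1 - p : ℕ)) : ℝ) + 1 = (n : ℝ) - (p : ℝ) from by
      push_cast [Nat.cast_sub (by omega : p ≤ n - 1), Nat.cast_sub (by omega : 1 ≤ n)]
      ring] at hci
  linear_combination u ^ (p + 1) * hci

lemma M3 {t : ℝ} (ht : t ≠ 0) (n : ℕ) :
    ∑ p ∈ Finset.range n, cf n p * (p : ℝ) * ((t - 1) / t) ^ p
      = (1 - t) * (∑ i ∈ Finset.Icc 1 n, ((t - 1) / t) ^ (n - i) * (H n - H (i - 1)) / (i : ℝ))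
        + t * ∑ k ∈ Finset.Icc 1 n, H k / (k : ℝ) * ((t - 1) / t) ^ k := by
  have hcore := M3core t n
  have hu : t * ((t - 1) / t) = t - 1 := by field_simp
  linear_combination t * hcore
    + ((∑ p ∈ Finset.range n, cf n p * (p : ℝ) * ((t - 1) / t) ^ p)
        - ∑ i ∈ Finset.Icc 1 n, ((t - 1) / t) ^ (n - i) * (H n - H (i - 1)) / (i : ℝ)) * hu

/-- For `n` a positive integer and real `0 < t < 1`,
`∑_{k=1}^∞ H_{k-1} t^k/(k C(n+k,k)) = (1/2)log²(1-t)
  + (t log(1-t)/(1-t)) ∑_{k=1}^n (1/k)((t-1)/t)^k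
  + (log²(1-t)/(2(1-t))) ∑_{k=1}^n ((t-1)/t)^k
  - (t/(1-t)) ∑_{k=1}^n (H_k/k)((t-1)/t)^k
  + (1/(1-t)) ∑_{p=0}^{n-1} { ∑_{k=1}^{n-p} ( (H_{p+k}-H_k)/((p+k)k) + 1/(k²(p+k)) ) } p ((t-1)/t)^p
  - (log(1-t)/(1-t)) ∑_{k=1}^n H_k ((t-1)/t)^k`. -/
theorem harmonic_binom_series_lin (n : ℕ) (hn : 0 < n) (t : ℝ) (ht0 : 0 < t) (ht1 : t < 1) :
    ∑' k : ℕ,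
        H k * t ^ (k + 1) / (((k : ℝ) + 1) * (Nat.choose (n + (k + 1)) (k + 1) : ℝ)) =
      1 / 2 * Real.log (1 - t) ^ 2 +
        t * Real.log (1 - t) / (1 - t) *
          (∑ k ∈ Finset.Icc 1 n, 1 / (k : ℝ) * ((t - 1) / t) ^ k) +
        Real.log (1 - t) ^ 2 / (2 * (1 - t)) * (∑ k ∈ Finset.Icc 1 n, ((t - 1) / t) ^ k) -
        t / (1 - t) * (∑ k ∈ Finset.Icc 1 n, H k / (k : ℝ) * ((t - 1) / t) ^ k) +
        1 / (1 - t) *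
          (∑ p ∈ Finset.range n,
            (∑ k ∈ Finset.Icc 1 (n - p),
                ((H (p + k) - H k) / (((p : ℝ) + (k : ℝ)) * (k : ℝ)) +
                  1 / ((k : ℝ) ^ 2 * ((p : ℝ) + (k : ℝ))))) * (p : ℝ) * ((t - 1) / t) ^ p) -
        Real.log (1 - t) / (1 - t) * ∑ k ∈ Finset.Icc 1 n, H k * ((t - 1) / t) ^ k := by
  have ht' : t ≠ 0 := ne_of_gt ht0
  have h1t : (1 : ℝ) - t ≠ 0 := ne_of_gt (by linarith)
  rw [tsum_eq_phi ht0 ht1 n]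
  have hsq : ∀ j ∈ Finset.range (n + 1),
      (-1 : ℝ) ^ j * (n.choose j) * ((Real.log (1 - t) ^ 2 / 2 - Cc t (-Real.log (1 - t)) j) / t ^ j)
      = (-1 : ℝ) ^ j * (n.choose j) * (((-Real.log (1 - t)) ^ 2 / 2 - Cc t (-Real.log (1 - t)) j) / t ^ j) := by
    intro j _
    rw [neg_sq]
  rw [Finset.sum_congr rfl hsq, philem ht' (-Real.log (1 - t)) n]
  have h3 := M3 ht' n
  simp only [cf] at h3
  rw [M1 ht' n, M2 ht' n, h3]
  generalize (∑ k ∈ Finset.Icc 1 n, 1 / (k : ℝ) * ((t - 1) / t) ^ k) = Sa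
  generalize (∑ k ∈ Finset.Icc 1 n, H k / (k : ℝ) * ((t - 1) / t) ^ k) = Sc
  generalize (∑ i ∈ Finset.Icc 1 n, ((t - 1) / t) ^ (n - i) * (H n - H (i - 1)) / (i : ℝ)) = D
  field_simp
  ring
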